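/- arXiv:2210.13306 — 6 statements merged into one kernel-verified Lean document; each statement's English description precedes it below -/
import Mathlib

section
/- In an AM-space X (a Banach lattice whose norm satisfies ‖a ∨ b‖ = max{‖a‖, ‖b‖} for all a, b ≥ 0), for all x, y ∈ X and ε > 0, if ‖y + x‖ ≤ 1 + ε and ‖y − x‖ ≤ 1 + ε, then ‖y + |x|‖ ≤ 1 + ε. -/
theorem stmt1 {X : Type*} [NormedAddCommGroup X] [Lattice X] [HasSolidNorm X] [IsOrderedAddMonoid X] [NormedSpace ℝ X] [CompleteSpace X]
    (hAM : ∀ a b : X, 0 ≤ a → 0 ≤ b → ‖a ⊔ b‖ = max ‖a‖ ‖b‖)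
    (x y : X) (ε : ℝ) (hε : 0 < ε)
    (h₁ : ‖y + x‖ ≤ 1 + ε) (h₂ : ‖y - x‖ ≤ 1 + ε) :
    ‖y + |x|‖ ≤ 1 + ε := by
  have key : y + |x| = (y + x) ⊔ (y - x) := by
    rw [abs, sub_eq_add_neg, ← add_sup]
  have habs : |(y + x) ⊔ (y - x)| ≤ |y + x| ⊔ |y - x| := by
    refine abs_le'.2 ⟨sup_le_sup (le_abs_self _) (le_abs_self _), ?_⟩
    rw [neg_sup]
    exact le_trans (inf_le_left.trans (neg_le_abs _)) le_sup_left
  have hs : ‖(y + x) ⊔ (y - x)‖ ≤ ‖|y + x| ⊔ |y - x|‖ := by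
    apply HasSolidNorm.solid
    rwa [abs_of_nonneg (le_trans (abs_nonneg _) le_sup_left)]
  rw [key]
  refine hs.trans ?_
  rw [hAM _ _ (abs_nonneg _) (abs_nonneg _), norm_abs_eq_norm, norm_abs_eq_norm]
  exact max_le h₁ h₂
end

section
/- Every AM-space that is locally almost square is positively locally almost square: if for every y in the unit sphere and ε > 0 there exists x in the unit sphere with ‖y ± x‖ ≤ 1 + ε, then for every y in the unit sphere and ε > 0 there exists a positive x in the unit sphere with ‖y ± x‖ ≤ 1 + ε. -/
theorem stmt2 {X : Type*} [NormedAddCommGroup X] [Lattice X] [HasSolidNorm X] [IsOrderedAddMonoid X] [NormedSpace ℝ X] [CompleteSpace X]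
    (hAM : ∀ a b : X, 0 ≤ a → 0 ≤ b → ‖a ⊔ b‖ = max ‖a‖ ‖b‖)
    (hLASQ : ∀ y : X, ‖y‖ = 1 → ∀ ε : ℝ, 0 < ε →
      ∃ x : X, ‖x‖ = 1 ∧ ‖y + x‖ ≤ 1 + ε ∧ ‖y - x‖ ≤ 1 + ε) :
    ∀ y : X, ‖y‖ = 1 → ∀ ε : ℝ, 0 < ε →
      ∃ x : X, 0 ≤ x ∧ ‖x‖ = 1 ∧ ‖y + x‖ ≤ 1 + ε ∧ ‖y - x‖ ≤ 1 + ε := by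
  intro y hy ε hε
  obtain ⟨x, hx, hadd, hsub⟩ := hLASQ y hy ε hε
  set z : X := |x| with hz
  set w : X := |y + x| ⊔ |y - x| with hw
  have hw0 : (0 : X) ≤ w := le_trans (abs_nonneg _) le_sup_left
  have hwn : ‖w‖ ≤ 1 + ε := by
    rw [hw, hAM _ _ (abs_nonneg _) (abs_nonneg _), norm_abs_eq_norm, norm_abs_eq_norm]
    exact max_le hadd hsub
  refine ⟨z, abs_nonneg x, by rw [hz, norm_abs_eq_norm]; exact hx, ?_, ?_⟩
  · have h1 : y + z = (y + x) ⊔ (y - x) := by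
      rw [hz, abs, add_sup, sub_eq_add_neg]
    have h2 : |y + z| ≤ w := by
      rw [h1, abs_le']
      refine ⟨sup_le_sup (le_abs_self _) (le_abs_self _), ?_⟩
      rw [neg_sup]
      exact le_trans inf_le_left (le_sup_of_le_left (neg_le_abs _))
    have h3 : ‖y + z‖ ≤ ‖w‖ := HasSolidNorm.solid (by rwa [abs_of_nonneg hw0])
    exact h3.trans hwn
  · have h1 : y - z = (y - x) ⊓ (y + x) := by
      rw [hz, abs, sub_sup, sub_eq_add_neg y (-x), neg_neg]
    have h2 : |y - z| ≤ w := by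
      rw [h1, abs_le']
      constructor
      · exact le_trans inf_le_left (le_sup_of_le_right (le_abs_self _))
      · rw [neg_inf]
        exact sup_le (le_sup_of_le_right (neg_le_abs _)) (le_sup_of_le_left (neg_le_abs _))
    have h3 : ‖y - z‖ ≤ ‖w‖ := HasSolidNorm.solid (by rwa [abs_of_nonneg hw0])
    exact h3.trans hwn
end

section
/- Let X be a Banach lattice. X is positively locally almost square if and only if for every y ≥ 0 with ‖y‖ = 1 and every ε > 0 there exists x ≥ 0 with ‖x‖ = 1 and ‖y + x‖ ≤ 1 + ε. -/
theorem stmt3 {X : Type*} [NormedAddCommGroup X] [Lattice X] [IsOrderedAddMonoid X] [HasSolidNorm X] [NormedSpace ℝ X] [CompleteSpace X] :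
    (∀ y : X, ‖y‖ = 1 → ∀ ε : ℝ, 0 < ε →
      ∃ x : X, 0 ≤ x ∧ ‖x‖ = 1 ∧ ‖y + x‖ ≤ 1 + ε ∧ ‖y - x‖ ≤ 1 + ε) ↔
    (∀ y : X, 0 ≤ y → ‖y‖ = 1 → ∀ ε : ℝ, 0 < ε →
      ∃ x : X, 0 ≤ x ∧ ‖x‖ = 1 ∧ ‖y + x‖ ≤ 1 + ε) := by
  constructor
  · intro h y _ hy ε hε
    obtain ⟨x, hx0, hx1, hadd, _⟩ := h y hy ε hε
    exact ⟨x, hx0, hx1, hadd⟩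
  · intro h y hy ε hε
    have habs : ‖|y|‖ = 1 := by rwa [norm_abs_eq_norm]
    obtain ⟨x, hx0, hx1, hadd⟩ := h |y| (abs_nonneg y) habs ε hε
    have key : ∀ z : X, |z| ≤ |y| + x → ‖z‖ ≤ 1 + ε := by
      intro z hz
      have : ‖z‖ ≤ ‖|y| + x‖ := by
        apply HasSolidNorm.solid
        rwa [abs_of_nonneg (add_nonneg (abs_nonneg y) hx0)]
      linarith
    refine ⟨x, hx0, hx1, ?_, ?_⟩
    · exact key _ ((abs_add_le y x).trans (by rw [abs_of_nonneg hx0]))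
    · exact key _ (by
        calc |y - x| ≤ |y| + |(-x)| := by rw [sub_eq_add_neg]; exact abs_add_le y (-x)
        _ = |y| + x := by rw [abs_neg, abs_of_nonneg hx0])
end

section
/- Let X be a Banach lattice that is positively locally almost square. Then for every y with ‖y‖ = 1 there exists a net (x_α) in X which converges weakly to 0 and satisfies lim ‖x_α‖ = 1 and lim ‖y + x_α‖ = 1 and lim ‖y − x_α‖ = 1. -/
open Filter Finset

section aux
variable {X : Type*} [NormedAddCommGroup X] [Lattice X] [IsOrderedAddMonoid X] [HasSolidNorm X] [NormedSpace ℝ X]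

private lemma abs_le_lat {a b : X} (h1 : a ≤ b) (h2 : -a ≤ b) : |a| ≤ b := sup_le h1 h2

private lemma lemA
    (hL : ∀ y : X, ‖y‖ = 1 → ∀ ε : ℝ, 0 < ε →
      ∃ x : X, 0 ≤ x ∧ ‖x‖ = 1 ∧ ‖y + x‖ ≤ 1 + ε ∧ ‖y - x‖ ≤ 1 + ε)
    (y : X) (hy : ‖y‖ = 1) (δ : ℝ) (hδ : 0 < δ) :
    ∀ n : ℕ, 2 ^ (n + 1) * δ ≤ 1 →
      ∃ w : Fin n → X, (∀ i, 0 ≤ w i) ∧ (∀ i, ‖w i‖ = 1) ∧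
        ‖|y| + ∑ i, w i‖ ≤ 1 + ((2:ℝ) ^ (n + 1) - 2) * δ ∧
        ∀ i, ‖y + w i‖ ≤ 1 + ((2:ℝ) ^ (n + 1) - 2) * δ ∧
             ‖y - w i‖ ≤ 1 + ((2:ℝ) ^ (n + 1) - 2) * δ := by
  intro n
  induction n with
  | zero =>
    intro _
    refine ⟨fun i => i.elim0, fun i => i.elim0, fun i => i.elim0, ?_, fun i => i.elim0⟩
    simp [norm_abs_eq_norm, hy]
  | succ n ih =>
    intro hsmall
    have hpow : (0:ℝ) < 2 ^ (n + 1) := by positivity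
    have hpow2 : ((2:ℝ) ^ (n + 1 + 1)) = 2 * 2 ^ (n + 1) := by ring
    have hsmall' : (2:ℝ) ^ (n + 1) * δ ≤ 1 := by nlinarith
    obtain ⟨w, hw0, hw1, hwsum, hwi⟩ := ih hsmall'
    set B : ℝ := ((2:ℝ) ^ (n + 1) - 2) * δ with hB
    have hB0 : 0 ≤ B := by
      have : (2:ℝ) ≤ 2 ^ (n+1) := by
        calc (2:ℝ) = 2^1 := by norm_num
        _ ≤ 2^(n+1) := by
          apply pow_le_pow_right₀ (by norm_num) (by omega)
      nlinarith
    have hB1 : B ≤ 1 := by nlinarith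
    set u : X := |y| + ∑ i, w i with hu
    have hsum0 : 0 ≤ ∑ i, w i := Finset.sum_nonneg fun i _ => hw0 i
    have hu0 : 0 ≤ u := add_nonneg (abs_nonneg y) hsum0
    have hyu : |y| ≤ u := le_add_of_nonneg_right hsum0
    have hc1 : (1:ℝ) ≤ ‖u‖ := by
      calc (1:ℝ) = ‖|y|‖ := by rw [norm_abs_eq_norm, hy]
      _ ≤ ‖u‖ := norm_le_norm_of_abs_le_abs (by rwa [abs_abs, abs_of_nonneg hu0])
    have hcpos : (0:ℝ) < ‖u‖ := lt_of_lt_of_le one_pos hc1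
    have hcne : ‖u‖ ≠ 0 := ne_of_gt hcpos
    have hv : ‖(‖u‖⁻¹ • u)‖ = 1 := by
      rw [norm_smul, norm_inv, norm_norm, inv_mul_cancel₀ hcne]
    obtain ⟨z, hz0, hz1, hzp, _⟩ := hL _ hv δ hδ
    have hid : u + z = ‖u‖ • (‖u‖⁻¹ • u + z) - (‖u‖ - 1) • z := by
      rw [smul_add, smul_inv_smul₀ hcne, sub_smul, one_smul]
      abel
    have hkey : ‖u + z‖ ≤ ‖u‖ * (1 + δ) + (‖u‖ - 1) := by
      rw [hid]
      calc ‖‖u‖ • (‖u‖⁻¹ • u + z) - (‖u‖ - 1) • z‖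
          ≤ ‖‖u‖ • (‖u‖⁻¹ • u + z)‖ + ‖(‖u‖ - 1) • z‖ := norm_sub_le _ _
      _ = ‖u‖ * ‖‖u‖⁻¹ • u + z‖ + |‖u‖ - 1| * ‖z‖ := by
          rw [norm_smul, norm_smul, Real.norm_eq_abs, Real.norm_eq_abs,
            abs_of_pos hcpos]
      _ ≤ ‖u‖ * (1 + δ) + (‖u‖ - 1) := by
          rw [hz1, abs_of_nonneg (by linarith)]
          have := mul_le_mul_of_nonneg_left hzp (le_of_lt hcpos)
          linarith
    have huB : ‖u‖ ≤ 1 + B := hwsum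
    have hnewB : ‖u + z‖ ≤ 1 + ((2:ℝ) ^ (n + 1 + 1) - 2) * δ := by
      rw [hpow2]
      nlinarith
    -- the new family
    refine ⟨Fin.cons z w, ?_, ?_, ?_, ?_⟩
    · intro i
      refine Fin.cases ?_ ?_ i
      · exact hz0
      · exact hw0
    · intro i
      refine Fin.cases ?_ ?_ i
      · exact hz1
      · exact hw1
    · have : |y| + ∑ i, Fin.cons z w i = u + z := by
        rw [Fin.sum_cons, hu]; abel
      rw [this]; exact hnewB
    · have hmono : 1 + B ≤ 1 + ((2:ℝ) ^ (n + 1 + 1) - 2) * δ := by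
        rw [hpow2]; nlinarith
      have hnegz : -z ≤ z := le_trans (neg_nonpos_of_nonneg hz0) hz0
      have habs1 : |y + z| ≤ u + z := by
        apply abs_le_lat
        · exact add_le_add (le_trans (le_abs_self y) hyu) (le_refl z)
        · rw [neg_add]
          exact add_le_add (le_trans (neg_le_abs y) hyu) hnegz
      have habs2 : |y - z| ≤ u + z := by
        apply abs_le_lat
        · rw [sub_eq_add_neg]
          exact add_le_add (le_trans (le_abs_self y) hyu) hnegz
        · have h : z - y ≤ u + z := by
            calc z - y = -y + z := by abel
            _ ≤ |y| + z := add_le_add (neg_le_abs y) le_rfl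
            _ ≤ u + z := add_le_add hyu le_rfl
          rw [neg_sub]; exact h
      have huz : |u + z| = u + z := abs_of_nonneg (add_nonneg hu0 hz0)
      intro i
      refine Fin.cases ?_ ?_ i
      · rw [Fin.cons_zero]
        constructor
        · exact le_trans (norm_le_norm_of_abs_le_abs (by rw [huz]; exact habs1)) hnewB
        · exact le_trans (norm_le_norm_of_abs_le_abs (by rw [huz]; exact habs2)) hnewB
      · intro j
        rw [Fin.cons_succ]
        exact ⟨le_trans (hwi j).1 hmono, le_trans (hwi j).2 hmono⟩

private lemma lemB (y : X) {n : ℕ} (w : Fin n → X) (hw0 : ∀ i, 0 ≤ w i)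
    (f : X →L[ℝ] ℝ) : ∑ i, |f (w i)| ≤ ‖f‖ * ‖|y| + ∑ i, w i‖ := by
  classical
  set σ : Fin n → ℝ := fun i => if 0 ≤ f (w i) then (1:ℝ) else -1 with hσ
  set t : X := ∑ i, σ i • w i with ht
  have hterm : ∀ i, |f (w i)| = f (σ i • w i) := by
    intro i
    by_cases h : 0 ≤ f (w i)
    · simp [hσ, h, abs_of_nonneg h]
    · simp [hσ, h, abs_of_neg (lt_of_not_ge h)]
  have hsum : ∑ i, |f (w i)| = f t := by
    rw [ht, map_sum]
    exact Finset.sum_congr rfl fun i _ => hterm i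
  have hpm : ∀ i, σ i • w i ≤ w i ∧ -(σ i • w i) ≤ w i := by
    intro i
    have hnw : -w i ≤ w i := le_trans (neg_nonpos_of_nonneg (hw0 i)) (hw0 i)
    by_cases h : 0 ≤ f (w i)
    · refine ⟨by simp [hσ, h], ?_⟩
      simpa [hσ, h] using hnw
    · refine ⟨?_, ?_⟩
      · simpa [hσ, h, neg_smul] using hnw
      · simp [hσ, h, neg_smul]
  have hle : |t| ≤ ∑ i, w i := by
    apply abs_le_lat
    · rw [ht]
      exact Finset.sum_le_sum fun i _ => (hpm i).1
    · rw [ht, ← Finset.sum_neg_distrib]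
      exact Finset.sum_le_sum fun i _ => (hpm i).2
  have habs : |t| ≤ |(|y| + ∑ i, w i)| := by
    rw [abs_of_nonneg (add_nonneg (abs_nonneg y) (Finset.sum_nonneg fun i _ => hw0 i))]
    exact hle.trans (le_add_of_nonneg_left (abs_nonneg y))
  calc ∑ i, |f (w i)| = f t := hsum
    _ ≤ |f t| := le_abs_self _
    _ = ‖f t‖ := (Real.norm_eq_abs _).symm
    _ ≤ ‖f‖ * ‖t‖ := f.le_opNorm t
    _ ≤ ‖f‖ * ‖|y| + ∑ i, w i‖ :=
        mul_le_mul_of_nonneg_left (norm_le_norm_of_abs_le_abs habs) (norm_nonneg f)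

private lemma blocks
    (hL : ∀ y : X, ‖y‖ = 1 → ∀ ε : ℝ, 0 < ε →
      ∃ x : X, 0 ≤ x ∧ ‖x‖ = 1 ∧ ‖y + x‖ ≤ 1 + ε ∧ ‖y - x‖ ≤ 1 + ε)
    (y : X) (hy : ‖y‖ = 1) :
    ∃ W : (m : ℕ) → Fin (m + 1) → X,
      (∀ m i, 0 ≤ W m i) ∧ (∀ m i, ‖W m i‖ = 1) ∧
      (∀ m, ‖|y| + ∑ i, W m i‖ ≤ 2) ∧
      (∀ m i, ‖y + W m i‖ ≤ 1 + ((m:ℝ) + 1)⁻¹ ∧ ‖y - W m i‖ ≤ 1 + ((m:ℝ) + 1)⁻¹) := by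
  have H : ∀ m : ℕ, ∃ w : Fin (m + 1) → X, (∀ i, 0 ≤ w i) ∧ (∀ i, ‖w i‖ = 1) ∧
      ‖|y| + ∑ i, w i‖ ≤ 1 + ((m:ℝ) + 1)⁻¹ ∧
      ∀ i, ‖y + w i‖ ≤ 1 + ((m:ℝ) + 1)⁻¹ ∧ ‖y - w i‖ ≤ 1 + ((m:ℝ) + 1)⁻¹ := by
    intro m
    have hm1 : (0:ℝ) < (m:ℝ) + 1 := by positivity
    set δ : ℝ := ((2:ℝ) ^ (m + 1 + 1))⁻¹ * ((m:ℝ) + 1)⁻¹ with hδdef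
    have hp : (0:ℝ) < 2 ^ (m + 1 + 1) := by positivity
    have hδ : 0 < δ := by positivity
    have hprod : (2:ℝ) ^ (m + 1 + 1) * δ = ((m:ℝ) + 1)⁻¹ := by
      rw [hδdef, ← mul_assoc, mul_inv_cancel₀ (ne_of_gt hp), one_mul]
    have hsm : (2:ℝ) ^ (m + 1 + 1) * δ ≤ 1 := by
      rw [hprod]
      rw [inv_le_one_iff₀]
      right; linarith
    obtain ⟨w, h0, h1, h2, h3⟩ := lemA hL y hy δ hδ (m + 1) hsm
    have hbd : 1 + ((2:ℝ) ^ (m + 1 + 1) - 2) * δ ≤ 1 + ((m:ℝ) + 1)⁻¹ := by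
      have : ((2:ℝ) ^ (m + 1 + 1) - 2) * δ ≤ 2 ^ (m + 1 + 1) * δ := by nlinarith
      rw [← hprod]; linarith
    exact ⟨w, h0, h1, le_trans h2 hbd, fun i => ⟨le_trans (h3 i).1 hbd, le_trans (h3 i).2 hbd⟩⟩
  choose W h0 h1 h2 h3 using H
  refine ⟨W, h0, h1, fun m => le_trans (h2 m) ?_, h3⟩
  have : ((m:ℝ) + 1)⁻¹ ≤ 1 := by
    rw [inv_le_one_iff₀]; right
    have : (0:ℝ) ≤ (m:ℝ) := Nat.cast_nonneg m
    linarith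
  linarith

end aux

theorem stmt9 {X : Type*} [NormedAddCommGroup X] [Lattice X] [IsOrderedAddMonoid X] [HasSolidNorm X] [NormedSpace ℝ X] [CompleteSpace X]
    (hLASQplus : ∀ y : X, ‖y‖ = 1 → ∀ ε : ℝ, 0 < ε →
      ∃ x : X, 0 ≤ x ∧ ‖x‖ = 1 ∧ ‖y + x‖ ≤ 1 + ε ∧ ‖y - x‖ ≤ 1 + ε) :
    ∀ y : X, ‖y‖ = 1 →
      ∃ (ι : Type) (l : Filter ι) (x : ι → X), l.NeBot ∧
        (∀ f : X →L[ℝ] ℝ, Filter.Tendsto (fun α => f (x α)) l (nhds 0)) ∧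
        Filter.Tendsto (fun α => ‖x α‖) l (nhds 1) ∧
        Filter.Tendsto (fun α => ‖y + x α‖) l (nhds 1) ∧
        Filter.Tendsto (fun α => ‖y - x α‖) l (nhds 1) := by
  intro y hy
  classical
  obtain ⟨W, hW0, hW1, hW2, hW3⟩ := blocks hLASQplus y hy
  have hfb : ∀ (m : ℕ) (f : X →L[ℝ] ℝ), ∑ i, |f (W m i)| ≤ 2 * ‖f‖ := by
    intro m f
    calc ∑ i, |f (W m i)| ≤ ‖f‖ * ‖|y| + ∑ i, W m i‖ := lemB y (W m) (hW0 m) f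
    _ ≤ ‖f‖ * 2 := mul_le_mul_of_nonneg_left (hW2 m) (norm_nonneg f)
    _ = 2 * ‖f‖ := mul_comm _ _
  set x : ℕ × ℕ → X := fun p => W p.1 ⟨p.2 % (p.1 + 1), Nat.mod_lt _ (Nat.succ_pos _)⟩ with hx
  set T : Finset ((X →L[ℝ] ℝ) × ℝ) × ℕ → Set (ℕ × ℕ) := fun q =>
    {p | q.2 ≤ p.1 ∧ ∀ r ∈ q.1, 0 < r.2 → |r.1 (x p)| ≤ r.2} with hT
  set l : Filter (ℕ × ℕ) := ⨅ q, Filter.principal (T q) with hl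
  have hTne : ∀ q, (T q).Nonempty := by
    rintro ⟨F, M⟩
    set F' := F.filter (fun r => 0 < r.2) with hF'
    set C : ℝ := ∑ r ∈ F', 2 * ‖r.1‖ / r.2 with hC
    have hC0 : 0 ≤ C := Finset.sum_nonneg (fun r hr => by
      have := (Finset.mem_filter.mp hr).2
      positivity)
    set m := max M ⌈C⌉₊ with hm
    have hCm : C ≤ (m : ℝ) + 1 := by
      calc C ≤ (⌈C⌉₊ : ℝ) := Nat.le_ceil C
      _ ≤ (m : ℝ) := by exact_mod_cast Nat.cast_le.mpr (le_max_right M ⌈C⌉₊)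
      _ ≤ (m : ℝ) + 1 := by linarith
    have hsum : ∑ i : Fin (m + 1), (∑ r ∈ F', |r.1 (W m i)| / r.2)
        ≤ ∑ i : Fin (m + 1), (1 : ℝ) := by
      rw [Finset.sum_comm]
      have h1 : ∑ r ∈ F', (∑ i : Fin (m + 1), |r.1 (W m i)| / r.2) ≤ C := by
        apply Finset.sum_le_sum
        intro r hr
        have hr2 : 0 < r.2 := (Finset.mem_filter.mp hr).2
        rw [← Finset.sum_div]
        exact div_le_div_of_nonneg_right (hfb m r.1) hr2.le |>.trans le_rfl
      have h2 : ∑ i : Fin (m + 1), (1 : ℝ) = (m : ℝ) + 1 := by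
        simp [Finset.sum_const, Finset.card_univ]
      rw [h2]
      exact h1.trans hCm
    obtain ⟨i, -, hi⟩ := Finset.exists_le_of_sum_le Finset.univ_nonempty hsum
    have hxi : x (m, i.val) = W m i := by
      have : (⟨i.val % (m + 1), Nat.mod_lt _ (Nat.succ_pos _)⟩ : Fin (m + 1)) = i :=
        Fin.ext (Nat.mod_eq_of_lt i.isLt)
      simp only [hx]
      rw [this]
    refine ⟨(m, i.val), le_max_left M _, ?_⟩
    intro r hr hr2
    have hrF' : r ∈ F' := Finset.mem_filter.mpr ⟨hr, hr2⟩
    have hterm : |r.1 (x (m, i.val))| / r.2 ≤ 1 := by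
      rw [hxi]
      refine le_trans (Finset.single_le_sum (f := fun r => |r.1 (W m i)| / r.2) ?_ hrF') hi
      intro r' hr'
      have := (Finset.mem_filter.mp hr').2
      positivity
    rwa [div_le_one hr2] at hterm
  have hdir : Directed (· ≥ ·) (fun q => (Filter.principal (T q) : Filter (ℕ × ℕ))) := by
    rintro ⟨F₁, M₁⟩ ⟨F₂, M₂⟩
    refine ⟨(F₁ ∪ F₂, max M₁ M₂), ?_, ?_⟩ <;>
    · refine Filter.principal_mono.mpr ?_
      rintro p ⟨hp1, hp2⟩
      refine ⟨by omega, fun r hr hr2 => hp2 r (by simp [Finset.mem_union, hr]) hr2⟩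
  have hne : l.NeBot := by
    rw [hl]
    exact Filter.iInf_neBot_of_directed hdir
      (fun q => Filter.principal_neBot_iff.mpr (hTne q))
  have hmem : ∀ q, T q ∈ l := fun q => Filter.mem_iInf_of_mem q (Filter.mem_principal_self _)
  have hfst : Filter.Tendsto (fun p : ℕ × ℕ => p.1) l Filter.atTop := by
    rw [Filter.tendsto_atTop]
    intro b
    filter_upwards [hmem (∅, b)] with p hp using hp.1
  have hinv : Filter.Tendsto (fun p : ℕ × ℕ => ((p.1 : ℝ) + 1)⁻¹) l (nhds 0) := by
    have := (tendsto_one_div_add_atTop_nhds_zero_nat (𝕜 := ℝ)).comp hfst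
    simpa [one_div, Function.comp_def] using this
  have hxnorm : ∀ p : ℕ × ℕ, ‖x p‖ = 1 := fun p => hW1 _ _
  have hxplus : ∀ p : ℕ × ℕ, ‖y + x p‖ ≤ 1 + ((p.1 : ℝ) + 1)⁻¹ := fun p => (hW3 p.1 _).1
  have hxminus : ∀ p : ℕ × ℕ, ‖y - x p‖ ≤ 1 + ((p.1 : ℝ) + 1)⁻¹ := fun p => (hW3 p.1 _).2
  have hlow : ∀ p : ℕ × ℕ, 2 - (1 + ((p.1 : ℝ) + 1)⁻¹) ≤ ‖y + x p‖ ∧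
      2 - (1 + ((p.1 : ℝ) + 1)⁻¹) ≤ ‖y - x p‖ := by
    intro p
    have h2 : (2 : ℝ) ≤ ‖y + x p‖ + ‖y - x p‖ := by
      have : y + y = (y + x p) + (y - x p) := by abel
      calc (2 : ℝ) = ‖(2 : ℝ) • y‖ := by
            rw [norm_smul, Real.norm_eq_abs, hy]; norm_num
      _ = ‖(y + x p) + (y - x p)‖ := by rw [two_smul, this]
      _ ≤ ‖y + x p‖ + ‖y - x p‖ := norm_add_le _ _
    constructor
    · have := hxminus p; linarith
    · have := hxplus p; linarith
  have hone : Filter.Tendsto (fun p : ℕ × ℕ => (1 : ℝ) + ((p.1 : ℝ) + 1)⁻¹) l (nhds 1) := by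
    simpa using (tendsto_const_nhds (x := (1:ℝ)) (f := l)).add hinv
  have honelow : Filter.Tendsto (fun p : ℕ × ℕ => 2 - ((1 : ℝ) + ((p.1 : ℝ) + 1)⁻¹)) l (nhds 1) := by
    have h := (tendsto_const_nhds (x := (2:ℝ)) (f := l)).sub hone
    convert h using 2
    norm_num
  refine ⟨ℕ × ℕ, l, x, hne, ?_, ?_, ?_, ?_⟩
  · intro f
    rw [NormedAddCommGroup.tendsto_nhds_zero]
    intro ε hε
    filter_upwards [hmem ({(f, ε / 2)}, 0)] with p hp
    have := hp.2 (f, ε / 2) (Finset.mem_singleton_self _) (by linarith)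
    rw [Real.norm_eq_abs]
    calc |f (x p)| ≤ ε / 2 := this
    _ < ε := by linarith
  · have : (fun p : ℕ × ℕ => ‖x p‖) = fun _ => (1 : ℝ) := funext fun p => hxnorm p
    rw [this]
    exact tendsto_const_nhds
  · exact tendsto_of_tendsto_of_tendsto_of_le_of_le honelow hone
      (fun p => (hlow p).1) (fun p => hxplus p)
  · exact tendsto_of_tendsto_of_tendsto_of_le_of_le honelow hone
      (fun p => (hlow p).2) (fun p => hxminus p)
end

section
/- Let X be a Banach lattice whose dual X* is separable. If X is positively locally almost square, then X is weakly almost square: for every y with ‖y‖ = 1 there exists a sequence (x_n) in X converging weakly to 0 with lim ‖x_n‖ = 1, lim ‖y + x_n‖ = 1 and lim ‖y − x_n‖ = 1. -/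
set_option maxHeartbeats 1000000

section WASQaux

variable {X : Type*} [NormedAddCommGroup X] [Lattice X] [IsOrderedAddMonoid X] [HasSolidNorm X]

lemma add_inf_le' {a b c : X} (ha : 0 ≤ a) (hb : 0 ≤ b) (hc : 0 ≤ c) :
    (a + b) ⊓ c ≤ a ⊓ c + b ⊓ c := by
  have h1 : a ⊓ c + b ⊓ c = ((a + b) ⊓ (c + b)) ⊓ ((a + c) ⊓ (c + c)) := by
    rw [add_inf, inf_add, inf_add]
  rw [h1]
  refine le_inf (le_inf inf_le_left ?_) (le_inf ?_ ?_)
  · exact inf_le_right.trans (le_add_of_nonneg_right hb)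
  · exact inf_le_right.trans (le_add_of_nonneg_left ha)
  · exact inf_le_right.trans (le_add_of_nonneg_right hc)

lemma nsmul_disjoint {a b : X} (ha : 0 ≤ a) (hb : 0 ≤ b) (hab : a ⊓ b = 0) (n : ℕ) :
    (n • a) ⊓ b = 0 := by
  induction n with
  | zero => simpa using hb
  | succ n ih =>
    refine le_antisymm ?_ (le_inf (nsmul_nonneg ha (n + 1)) hb)
    have h := add_inf_le' (nsmul_nonneg ha n) ha hb
    rw [ih, hab, add_zero] at h
    rw [succ_nsmul]; exact h

lemma nsmul_nonneg_rev {z : X} (n : ℕ) (hn : n ≠ 0) (h : 0 ≤ n • z) : 0 ≤ z := by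
  have hp : z⁺ ⊓ z⁻ = 0 := posPart_inf_negPart_eq_zero z
  have hz : z = z⁺ - z⁻ := (posPart_sub_negPart z).symm
  have h1 : n • z⁻ ≤ n • z⁺ := by
    have : n • z = n • z⁺ - n • z⁻ := by rw [← smul_sub, ← hz]
    rw [this, sub_nonneg] at h
    exact h
  have h2 : z⁻ ≤ n • z⁻ := by
    rcases Nat.exists_eq_succ_of_ne_zero hn with ⟨m, rfl⟩
    rw [succ_nsmul]
    exact le_add_of_nonneg_left (nsmul_nonneg (negPart_nonneg z) m)
  have h3 : z⁻ ≤ (n • z⁺) ⊓ z⁻ := le_inf (h2.trans h1) le_rfl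
  have h4 : (n • z⁺) ⊓ z⁻ = 0 :=
    nsmul_disjoint (posPart_nonneg z) (negPart_nonneg z) hp n
  have h5 : z⁻ ≤ 0 := h3.trans_eq h4
  have : z⁻ = 0 := le_antisymm h5 (negPart_nonneg z)
  rw [← posPart_sub_negPart z, this, sub_zero]
  exact posPart_nonneg z


variable {X : Type*} [NormedAddCommGroup X] [Lattice X] [IsOrderedAddMonoid X] [HasSolidNorm X] [NormedSpace ℝ X]

lemma rat_smul_nonneg {x : X} (hx : 0 ≤ x) (q : ℚ) (hq : 0 ≤ q) : 0 ≤ (q : ℝ) • x := by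
  have hden : (q.den : ℕ) ≠ 0 := q.den_nz
  apply nsmul_nonneg_rev q.den hden
  have : (q.den : ℕ) • ((q : ℝ) • x) = ((q.den : ℝ) * (q : ℝ)) • x := by
    rw [← Nat.cast_smul_eq_nsmul ℝ, smul_smul]
  rw [this]
  have hnum : ((q.den : ℝ) * (q : ℝ)) = (q.num : ℝ) := by
    push_cast
    rw [Rat.cast_def]
    field_simp
  rw [hnum]
  have hnn : 0 ≤ q.num := Rat.num_nonneg.mpr hq
  obtain ⟨m, hm⟩ := Int.eq_ofNat_of_zero_le hnn
  rw [hm]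
  push_cast
  rw [Nat.cast_smul_eq_nsmul]
  exact nsmul_nonneg hx m

lemma real_smul_nonneg {x : X} (hx : 0 ≤ x) {t : ℝ} (ht : 0 ≤ t) : 0 ≤ t • x := by
  -- approximate t by rationals from above
  have key : ∀ n : ℕ, ∃ q : ℚ, 0 ≤ q ∧ t ≤ q ∧ (q : ℝ) < t + 1 / (n + 1) := by
    intro n
    obtain ⟨q, hq1, hq2⟩ := exists_rat_btwn (lt_add_of_pos_right t (by positivity : (0:ℝ) < 1 / (n + 1)))
    exact ⟨q, by exact_mod_cast le_trans ht hq1.le, hq1.le, hq2⟩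
  choose q hq0 hq1 hq2 using key
  have hconv : Filter.Tendsto (fun n : ℕ => ((q n : ℝ)) • x) Filter.atTop (nhds (t • x)) := by
    have : Filter.Tendsto (fun n : ℕ => (q n : ℝ)) Filter.atTop (nhds t) := by
      apply tendsto_of_tendsto_of_tendsto_of_le_of_le (tendsto_const_nhds) ?_ hq1 (fun n => (hq2 n).le)
      have : Filter.Tendsto (fun n : ℕ => t + 1 / ((n: ℝ) + 1)) Filter.atTop (nhds (t + 0)) :=
        Filter.Tendsto.const_add t tendsto_one_div_add_atTop_nhds_zero_nat
      simpa using this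
    exact (this.smul tendsto_const_nhds)
  have hcl : IsClosed {z : X | 0 ≤ z} := isClosed_nonneg
  exact hcl.mem_of_tendsto hconv (Filter.Eventually.of_forall fun n => rat_smul_nonneg hx (q n) (hq0 n))


lemma norm_mono' {a b : X} (ha : 0 ≤ a) (hab : a ≤ b) : ‖a‖ ≤ ‖b‖ :=
  norm_le_norm_of_abs_le_abs (by rw [abs_of_nonneg ha, abs_of_nonneg (ha.trans hab)]; exact hab)

lemma le_smul_self' {v : X} (hv : 0 ≤ v) {c : ℝ} (hc : 1 ≤ c) : v ≤ c • v := by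
  have h : 0 ≤ (c - 1) • v := real_smul_nonneg hv (by linarith)
  rw [sub_smul, one_smul, sub_nonneg] at h
  exact h

lemma keyA (hL : ∀ y : X, ‖y‖ = 1 → ∀ ε : ℝ, 0 < ε →
      ∃ x : X, 0 ≤ x ∧ ‖x‖ = 1 ∧ ‖y + x‖ ≤ 1 + ε ∧ ‖y - x‖ ≤ 1 + ε)
    (y : X) (hy : ‖y‖ = 1) (g : ℕ → X →L[ℝ] ℝ) (m : ℕ) (δ : ℝ)
    (hδ : 0 < δ) (hδ1 : δ ≤ 1) :
    ∃ x : X, 0 ≤ x ∧ ‖x‖ = 1 ∧ ‖y + x‖ ≤ 1 + δ ∧ ‖y - x‖ ≤ 1 + δ ∧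
      ∀ k ≤ m, |g k x| ≤ δ := by
  classical
  set S : ℝ := ∑ k ∈ Finset.range (m + 1), 4 * ‖g k‖ with hS
  have hS0 : 0 ≤ S := Finset.sum_nonneg fun k _ => by positivity
  set N : ℕ := ⌊S / δ⌋₊ + 1 with hN
  have hN0 : 0 < N := Nat.succ_pos _
  have hNR : (0:ℝ) < N := by exact_mod_cast hN0
  have hSN : S < N * δ := by
    have h1 : S / δ < (⌊S / δ⌋₊ : ℝ) + 1 := Nat.lt_floor_add_one (S / δ)
    have h2 : ((N:ℕ):ℝ) = (⌊S / δ⌋₊ : ℝ) + 1 := by rw [hN]; push_cast; ring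
    calc S = S / δ * δ := by field_simp
    _ < ((⌊S / δ⌋₊ : ℝ) + 1) * δ := by apply mul_lt_mul_of_pos_right h1 hδ
    _ = N * δ := by rw [h2]
  set ε : ℝ := δ / (2 * N) with hε
  have hε0 : 0 < ε := by positivity
  have step : ∀ u : X, |y| ≤ u → ∃ v : X, 0 ≤ v ∧ ‖v‖ = 1 ∧
      ‖u + ‖u‖ • v‖ ≤ ‖u‖ * (1 + ε) := by
    intro u hu
    have hu1 : 1 ≤ ‖u‖ := by
      have := norm_mono' (abs_nonneg y) hu
      rwa [norm_abs_eq_norm, hy] at this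
    have hupos : (0:ℝ) < ‖u‖ := by linarith
    have hw : ‖(‖u‖⁻¹ • u)‖ = 1 := by
      rw [norm_smul, norm_inv, norm_norm, inv_mul_cancel₀ (ne_of_gt hupos)]
    obtain ⟨v, hv0, hv1, hvp, _⟩ := hL _ hw ε hε0
    refine ⟨v, hv0, hv1, ?_⟩
    have hid : u + ‖u‖ • v = ‖u‖ • (‖u‖⁻¹ • u + v) := by
      rw [smul_add, smul_smul, mul_inv_cancel₀ (ne_of_gt hupos), one_smul]
    rw [hid, norm_smul, Real.norm_eq_abs, abs_of_pos hupos]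
    exact mul_le_mul_of_nonneg_left hvp hupos.le
  let U : ℕ → {u : X // |y| ≤ u} := fun n =>
    Nat.rec ⟨|y|, le_rfl⟩
      (fun _ p => ⟨p.1 + ‖p.1‖ • (step p.1 p.2).choose,
        p.2.trans (le_add_of_nonneg_right
          (real_smul_nonneg (step p.1 p.2).choose_spec.1 (norm_nonneg _)))⟩) n
  have hexists : ∃ (u : ℕ → X) (v : ℕ → X),
      (∀ n, u (n + 1) = u n + ‖u n‖ • v n) ∧ (∀ n, |y| ≤ u n) ∧ u 0 = |y| ∧
      (∀ n, (0:X) ≤ v n) ∧ (∀ n, ‖v n‖ = 1) ∧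
      (∀ n, ‖u (n + 1)‖ ≤ ‖u n‖ * (1 + ε)) :=
    ⟨fun n => (U n).1, fun n => (step (U n).1 (U n).2).choose,
      fun n => rfl, fun n => (U n).2, rfl,
      fun n => (step (U n).1 (U n).2).choose_spec.1,
      fun n => (step (U n).1 (U n).2).choose_spec.2.1,
      fun n => (step (U n).1 (U n).2).choose_spec.2.2⟩
  obtain ⟨u, v, hrec, hyle, hu_zero, hv0, hv1, hvstep⟩ := hexists
  clear_value U
  clear U
  have hu0 : ∀ n, (0:X) ≤ u n := fun n => (abs_nonneg y).trans (hyle n)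
  have hu1 : ∀ n, 1 ≤ ‖u n‖ := by
    intro n
    have := norm_mono' (abs_nonneg y) (hyle n)
    rwa [norm_abs_eq_norm, hy] at this
  have hvle : ∀ n, v n ≤ ‖u n‖ • v n := fun n => le_smul_self' (hv0 n) (hu1 n)
  have humono : ∀ n, u n ≤ u (n + 1) := by
    intro n
    rw [hrec]
    exact le_add_of_nonneg_right (real_smul_nonneg (hv0 n) (norm_nonneg _))
  have hub : ∀ n, n ≤ N → ‖u n‖ ≤ 1 + 2 * ε * n := by
    intro n
    induction n with
    | zero => intro _; rw [hu_zero, norm_abs_eq_norm, hy]; simp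
    | succ n ih =>
      intro hn
      have hn' : n ≤ N := Nat.le_of_succ_le hn
      have h1 := hvstep n
      have h2 := ih hn'
      have h3 : 2 * ε * n ≤ 1 := by
        have he : 2 * ε * (n:ℝ) = δ * n / N := by rw [hε]; field_simp
        rw [he, div_le_one hNR]
        have hnN : (n:ℝ) ≤ N := by exact_mod_cast hn'
        nlinarith
      have h4 : ‖u n‖ * (1 + ε) ≤ (1 + 2 * ε * n) * (1 + ε) :=
        mul_le_mul_of_nonneg_right h2 (by linarith)
      have hc : ((n:ℝ) + 1) = ((n + 1 : ℕ) : ℝ) := by push_cast; ring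
      calc ‖u (n+1)‖ ≤ (1 + 2 * ε * n) * (1 + ε) := le_trans h1 h4
      _ ≤ 1 + 2 * ε * ((n:ℝ) + 1) := by nlinarith
      _ = 1 + 2 * ε * ((n + 1 : ℕ) : ℝ) := by rw [hc]
  have hubN : ∀ n, n ≤ N → ‖u n‖ ≤ 1 + δ := by
    intro n hn
    refine (hub n hn).trans ?_
    have h1 : 2 * ε * n ≤ 2 * ε * N :=
      mul_le_mul_of_nonneg_left (by exact_mod_cast hn) (by positivity)
    have h2 : 2 * ε * N = δ := by rw [hε]; field_simp
    linarith
  have hsum : ∀ n, ∀ F : Finset ℕ, F ⊆ Finset.range n → (∑ i ∈ F, v i) ≤ u n := by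
    intro n
    induction n with
    | zero =>
      intro F hF
      have : F = ∅ := Finset.subset_empty.mp (by simpa using hF)
      subst this
      simpa using hu0 0
    | succ n ih =>
      intro F hF
      by_cases hn : n ∈ F
      · have he : F.erase n ⊆ Finset.range n := by
          intro i hi
          have hi1 := Finset.mem_of_mem_erase hi
          have hi2 := Finset.ne_of_mem_erase hi
          have := hF hi1
          rw [Finset.mem_range] at this ⊢
          omega
        have hsplit : (∑ i ∈ F, v i) = (∑ i ∈ F.erase n, v i) + v n :=
          (Finset.sum_erase_add F _ hn).symm
        rw [hsplit, hrec]
        exact add_le_add (ih _ he) (hvle n)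
      · have he : F ⊆ Finset.range n := by
          intro i hi
          have := hF hi
          rw [Finset.mem_range] at this ⊢
          rcases Nat.lt_succ_iff_lt_or_eq.mp this with h | h
          · exact h
          · exact absurd (h ▸ hi) hn
        exact (ih _ he).trans (humono n)
  have habs : ∀ (B : Finset ℕ), B ⊆ Finset.range N → ∀ k,
      |(g k) (∑ i ∈ B, v i)| ≤ 2 * ‖g k‖ := by
    intro B hB k
    have h1 : (0:X) ≤ ∑ i ∈ B, v i := Finset.sum_nonneg fun i _ => hv0 i
    have h2 : (∑ i ∈ B, v i) ≤ u N := hsum N B hB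
    have h3 : ‖∑ i ∈ B, v i‖ ≤ 1 + δ := (norm_mono' h1 h2).trans (hubN N le_rfl)
    calc |(g k) (∑ i ∈ B, v i)| ≤ ‖g k‖ * ‖∑ i ∈ B, v i‖ := (g k).le_opNorm _
    _ ≤ ‖g k‖ * 2 := mul_le_mul_of_nonneg_left (by linarith) (norm_nonneg _)
    _ = 2 * ‖g k‖ := by ring
  have hgsum : ∀ k, (∑ i ∈ Finset.range N, |(g k) (v i)|) ≤ 4 * ‖g k‖ := by
    intro k
    set P : ℕ → Prop := fun i => 0 ≤ (g k) (v i) with hP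
    have hsplit := Finset.sum_filter_add_sum_filter_not (Finset.range N) P
      (fun i => |(g k) (v i)|)
    set A : Finset ℕ := (Finset.range N).filter P with hA
    set B : Finset ℕ := (Finset.range N).filter (fun i => ¬ P i) with hB
    have hAg : (∑ i ∈ A, |(g k) (v i)|) = (g k) (∑ i ∈ A, v i) := by
      rw [map_sum]
      refine Finset.sum_congr rfl fun i hi => ?_
      exact abs_of_nonneg (Finset.mem_filter.mp hi).2
    have hBg : (∑ i ∈ B, |(g k) (v i)|) = -((g k) (∑ i ∈ B, v i)) := by
      rw [map_sum, ← Finset.sum_neg_distrib]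
      refine Finset.sum_congr rfl fun i hi => ?_
      have := (Finset.mem_filter.mp hi).2
      rw [hP] at this
      push_neg at this
      rw [abs_of_neg this]
    have hAb : (g k) (∑ i ∈ A, v i) ≤ 2 * ‖g k‖ :=
      (le_abs_self _).trans (habs A (Finset.filter_subset _ _) k)
    have hBb : -((g k) (∑ i ∈ B, v i)) ≤ 2 * ‖g k‖ :=
      (neg_le_abs _).trans (habs B (Finset.filter_subset _ _) k)
    calc (∑ i ∈ Finset.range N, |(g k) (v i)|)
        = (∑ i ∈ A, |(g k) (v i)|) + ∑ i ∈ B, |(g k) (v i)| := hsplit.symm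
    _ ≤ 2 * ‖g k‖ + 2 * ‖g k‖ := by rw [hAg, hBg]; exact add_le_add hAb hBb
    _ = 4 * ‖g k‖ := by ring
  -- find a good index
  have hT : (∑ i ∈ Finset.range N, ∑ k ∈ Finset.range (m+1), |(g k) (v i)|) ≤ S := by
    rw [Finset.sum_comm, hS]
    exact Finset.sum_le_sum fun k _ => hgsum k
  have hex : ∃ i ∈ Finset.range N, (∑ k ∈ Finset.range (m+1), |(g k) (v i)|) ≤ δ := by
    by_contra hcon
    push_neg at hcon
    have hlow : (N : ℝ) * δ ≤ ∑ i ∈ Finset.range N, ∑ k ∈ Finset.range (m+1), |(g k) (v i)| := by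
      have := Finset.card_nsmul_le_sum (Finset.range N)
        (fun i => ∑ k ∈ Finset.range (m+1), |(g k) (v i)|) δ
        (fun i hi => (hcon i hi).le)
      simpa [nsmul_eq_mul] using this
    linarith
  obtain ⟨i, hiN, hgood⟩ := hex
  rw [Finset.mem_range] at hiN
  have hbnd : ∀ z : X, |z| ≤ u (i+1) → ‖z‖ ≤ 1 + δ := by
    intro z hz
    have h2 : ‖z‖ = ‖|z|‖ := (norm_abs_eq_norm z).symm
    rw [h2]
    exact (norm_mono' (abs_nonneg z) hz).trans (hubN (i+1) hiN)
  have hkey : |y| + v i ≤ u (i+1) := by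
    rw [hrec i]
    exact add_le_add (hyle i) (hvle i)
  refine ⟨v i, hv0 i, hv1 i, ?_, ?_, ?_⟩
  · refine hbnd _ (le_trans ?_ hkey)
    calc |y + v i| ≤ |y| + |v i| := abs_add_le _ _
    _ = |y| + v i := by rw [abs_of_nonneg (hv0 i)]
  · refine hbnd _ (le_trans ?_ hkey)
    calc |y - v i| = |y + -(v i)| := by rw [sub_eq_add_neg]
    _ ≤ |y| + |-(v i)| := abs_add_le _ _
    _ = |y| + v i := by rw [abs_neg, abs_of_nonneg (hv0 i)]
  · intro k hk
    refine le_trans ?_ hgood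
    exact Finset.single_le_sum (f := fun k => |(g k) (v i)|) (fun j _ => abs_nonneg _)
      (Finset.mem_range.mpr (Nat.lt_succ_of_le hk))

end WASQaux

theorem stmt10 {X : Type*} [NormedAddCommGroup X] [Lattice X] [IsOrderedAddMonoid X] [HasSolidNorm X] [NormedSpace ℝ X] [CompleteSpace X]
    [TopologicalSpace.SeparableSpace (X →L[ℝ] ℝ)]
    (hLASQplus : ∀ y : X, ‖y‖ = 1 → ∀ ε : ℝ, 0 < ε →
      ∃ x : X, 0 ≤ x ∧ ‖x‖ = 1 ∧ ‖y + x‖ ≤ 1 + ε ∧ ‖y - x‖ ≤ 1 + ε) :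
    ∀ y : X, ‖y‖ = 1 →
      ∃ x : ℕ → X,
        (∀ f : X →L[ℝ] ℝ, Filter.Tendsto (fun n => f (x n)) Filter.atTop (nhds 0)) ∧
        Filter.Tendsto (fun n => ‖x n‖) Filter.atTop (nhds 1) ∧
        Filter.Tendsto (fun n => ‖y + x n‖) Filter.atTop (nhds 1) ∧
        Filter.Tendsto (fun n => ‖y - x n‖) Filter.atTop (nhds 1) := by
  intro y hy
  have hne : Nonempty (X →L[ℝ] ℝ) := ⟨0⟩
  set g : ℕ → X →L[ℝ] ℝ := TopologicalSpace.denseSeq (X →L[ℝ] ℝ) with hg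
  have hgd : DenseRange g := TopologicalSpace.denseRange_denseSeq _
  have hδpos : ∀ m : ℕ, 0 < 1 / ((m:ℝ) + 1) := fun m => by positivity
  have hδ1 : ∀ m : ℕ, 1 / ((m:ℝ) + 1) ≤ 1 := fun m => by
    rw [div_le_one (by positivity)]
    simp
  choose x hx0 hx1 hxp hxm hxg using fun m : ℕ =>
    keyA hLASQplus y hy g m (1 / ((m:ℝ) + 1)) (hδpos m) (hδ1 m)
  have hdlim : Filter.Tendsto (fun m : ℕ => 1 / ((m:ℝ) + 1)) Filter.atTop (nhds 0) :=
    tendsto_one_div_add_atTop_nhds_zero_nat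
  have hlow : ∀ m : ℕ, 1 - 1 / ((m:ℝ) + 1) ≤ ‖y + x m‖ := by
    intro m
    have h2 : (2:ℝ) ≤ ‖y + x m‖ + ‖y - x m‖ := by
      have hid : (y + x m) + (y - x m) = y + y := by abel
      have : ‖(y + x m) + (y - x m)‖ ≤ ‖y + x m‖ + ‖y - x m‖ := norm_add_le _ _
      rw [hid] at this
      have h2y : ‖y + y‖ = 2 := by
        have : y + y = (2:ℝ) • y := (two_smul ℝ y).symm
        rw [this, norm_smul, hy]
        norm_num
      linarith
    linarith [hxm m]
  have hlow2 : ∀ m : ℕ, 1 - 1 / ((m:ℝ) + 1) ≤ ‖y - x m‖ := by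
    intro m
    have h2 : (2:ℝ) ≤ ‖y + x m‖ + ‖y - x m‖ := by
      have hid : (y + x m) + (y - x m) = y + y := by abel
      have h3 : ‖(y + x m) + (y - x m)‖ ≤ ‖y + x m‖ + ‖y - x m‖ := norm_add_le _ _
      rw [hid] at h3
      have h2y : ‖y + y‖ = 2 := by
        have : y + y = (2:ℝ) • y := (two_smul ℝ y).symm
        rw [this, norm_smul, hy]
        norm_num
      linarith
    linarith [hxp m]
  have hone : Filter.Tendsto (fun m : ℕ => (1:ℝ) - 1 / ((m:ℝ) + 1)) Filter.atTop (nhds 1) := by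
    have := Filter.Tendsto.const_sub (1:ℝ) hdlim
    simpa using this
  have hone' : Filter.Tendsto (fun m : ℕ => (1:ℝ) + 1 / ((m:ℝ) + 1)) Filter.atTop (nhds 1) := by
    have := Filter.Tendsto.const_add (1:ℝ) hdlim
    simpa using this
  refine ⟨x, ?_, ?_, ?_, ?_⟩
  · intro f
    rw [Metric.tendsto_atTop]
    intro η hη
    obtain ⟨k, hk⟩ := hgd.exists_dist_lt f (half_pos hη)
    obtain ⟨M, hM⟩ := exists_nat_one_div_lt (half_pos hη)
    refine ⟨max k M, fun m hm => ?_⟩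
    have hkm : k ≤ m := le_trans (le_max_left _ _) hm
    have hMm : M ≤ m := le_trans (le_max_right _ _) hm
    have h1 : |g k (x m)| ≤ 1 / ((m:ℝ) + 1) := hxg m k hkm
    have h2 : 1 / ((m:ℝ) + 1) ≤ 1 / ((M:ℝ) + 1) := by
      apply one_div_le_one_div_of_le (by positivity)
      have : (M:ℝ) ≤ m := by exact_mod_cast hMm
      linarith
    have h3 : |f (x m) - g k (x m)| ≤ ‖f - g k‖ := by
      have := (f - g k).le_opNorm (x m)
      simp only [ContinuousLinearMap.sub_apply] at this
      calc |f (x m) - g k (x m)| ≤ ‖f - g k‖ * ‖x m‖ := this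
      _ = ‖f - g k‖ := by rw [hx1 m, mul_one]
    have h4 : ‖f - g k‖ < η / 2 := by rwa [← dist_eq_norm]
    have : |f (x m)| < η := by
      calc |f (x m)| ≤ |f (x m) - g k (x m)| + |g k (x m)| := by
            have := abs_add_le (f (x m) - g k (x m)) (g k (x m))
            simpa using this
      _ ≤ ‖f - g k‖ + 1 / ((m:ℝ) + 1) := add_le_add h3 h1
      _ < η / 2 + η / 2 := by
            apply add_lt_add_of_lt_of_le h4
            calc 1 / ((m:ℝ) + 1) ≤ 1 / ((M:ℝ) + 1) := h2
            _ ≤ η / 2 := hM.le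
      _ = η := by ring
    simpa [Real.dist_eq] using this
  · have : (fun m : ℕ => ‖x m‖) = fun _ => (1:ℝ) := funext hx1
    rw [this]
    exact tendsto_const_nhds
  · exact tendsto_of_tendsto_of_tendsto_of_le_of_le hone hone' hlow (fun m => hxp m)
  · exact tendsto_of_tendsto_of_tendsto_of_le_of_le hone hone' hlow2 (fun m => hxm m)
end

section
/- If a Banach lattice X is positively locally almost square and 𝓕 is a non-principal ultrafilter on ℕ, then the ultrapower X^𝓕 (with the positive cone of elements admitting coordinatewise positive representatives) is positively locally almost square. -/
open Filter

/-- A bounded real sequence converges along any ultrafilter. -/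
lemma exists_ultrafilter_lim (F : Ultrafilter ℕ) (f : ℕ → ℝ) (C : ℝ)
    (h : ∀ n, |f n| ≤ C) : ∃ L : ℝ, Filter.Tendsto f F (nhds L) := by
  have hmem : (F.map f : Filter ℝ) ≤ Filter.principal (Set.Icc (-C) C) := by
    rw [Filter.le_principal_iff]
    refine Filter.mem_map.2 (Filter.univ_mem' fun n => ?_)
    exact Set.mem_Icc.2 (abs_le.1 (h n))
  obtain ⟨a, _, ha⟩ := isCompact_Icc.ultrafilter_le_nhds (F.map f) hmem
  exact ⟨a, ha⟩

theorem stmt14 {X : Type*} [NormedAddCommGroup X] [Lattice X] [IsOrderedAddMonoid X] [HasSolidNorm X] [NormedSpace ℝ X] [CompleteSpace X]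
    (F : Ultrafilter ℕ) (hF : (F : Filter ℕ) ≤ Filter.cofinite)
    (hLASQplus : ∀ y : X, ‖y‖ = 1 → ∀ ε : ℝ, 0 < ε →
      ∃ x : X, 0 ≤ x ∧ ‖x‖ = 1 ∧ ‖y + x‖ ≤ 1 + ε ∧ ‖y - x‖ ≤ 1 + ε) :
    -- LASQ+ for the ultrapower `X^F`, stated via representatives: an element of the
    -- ultrapower is (the class of) a bounded sequence, its norm is the limit of the
    -- coordinate norms along `F`, and it is positive iff it admits a coordinatewise
    -- positive representative.
    ∀ y : ℕ → X, (∃ C : ℝ, ∀ n, ‖y n‖ ≤ C) →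
      Filter.Tendsto (fun n => ‖y n‖) F (nhds 1) →
      ∀ ε : ℝ, 0 < ε →
        ∃ x : ℕ → X, (∃ C : ℝ, ∀ n, ‖x n‖ ≤ C) ∧ (∀ n, 0 ≤ x n) ∧
          Filter.Tendsto (fun n => ‖x n‖) F (nhds 1) ∧
          (∃ L₁ : ℝ, L₁ ≤ 1 + ε ∧ Filter.Tendsto (fun n => ‖y n + x n‖) F (nhds L₁)) ∧
          (∃ L₂ : ℝ, L₂ ≤ 1 + ε ∧ Filter.Tendsto (fun n => ‖y n - x n‖) F (nhds L₂)) := by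
  intro y ⟨C, hC⟩ hy ε hε
  -- choose companions
  have key : ∀ n, ∃ x : X, 0 ≤ x ∧ ‖x‖ ≤ 1 ∧ (1/2 ≤ ‖y n‖ →
      ‖x‖ = 1 ∧ ‖y n + x‖ ≤ 1 + ε/2 + |‖y n‖ - 1| ∧ ‖y n - x‖ ≤ 1 + ε/2 + |‖y n‖ - 1|) := by
    intro n
    by_cases h : 1/2 ≤ ‖y n‖
    · have hpos : (0:ℝ) < ‖y n‖ := by linarith
      have hne : ‖y n‖ ≠ 0 := ne_of_gt hpos
      have hnorm : ‖‖y n‖⁻¹ • y n‖ = 1 := by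
        rw [norm_smul, norm_inv, norm_norm, inv_mul_cancel₀ hne]
      obtain ⟨x, hx0, hx1, hxp, hxm⟩ := hLASQplus _ hnorm (ε/2) (by positivity)
      have hdiff : ‖y n - ‖y n‖⁻¹ • y n‖ = |‖y n‖ - 1| := by
        have h1 : y n - ‖y n‖⁻¹ • y n = (1 - ‖y n‖⁻¹) • y n := by
          rw [sub_smul, one_smul]
        rw [h1, norm_smul, Real.norm_eq_abs]
        rw [← abs_of_pos hpos, ← abs_mul]
        congr 1
        field_simp
        rw [abs_of_pos hpos]
        ring
      refine ⟨x, hx0, le_of_eq hx1, fun _ => ⟨hx1, ?_, ?_⟩⟩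
      · calc ‖y n + x‖ = ‖(‖y n‖⁻¹ • y n + x) + (y n - ‖y n‖⁻¹ • y n)‖ := by congr 1; abel
          _ ≤ ‖‖y n‖⁻¹ • y n + x‖ + ‖y n - ‖y n‖⁻¹ • y n‖ := norm_add_le _ _
          _ ≤ (1 + ε/2) + |‖y n‖ - 1| := by rw [hdiff]; linarith
      · calc ‖y n - x‖ = ‖(‖y n‖⁻¹ • y n - x) + (y n - ‖y n‖⁻¹ • y n)‖ := by congr 1; abel
          _ ≤ ‖‖y n‖⁻¹ • y n - x‖ + ‖y n - ‖y n‖⁻¹ • y n‖ := norm_add_le _ _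
          _ ≤ (1 + ε/2) + |‖y n‖ - 1| := by rw [hdiff]; linarith
    · exact ⟨0, le_refl 0, by simp, fun hc => absurd hc h⟩
  choose x hx0 hx1 hxS using key
  have hC0 : 0 ≤ C := le_trans (norm_nonneg _) (hC 0)
  have hS : ∀ᶠ n in (F : Filter ℕ), 1/2 ≤ ‖y n‖ :=
    hy.eventually (eventually_ge_nhds (by norm_num : (1/2:ℝ) < 1))
  -- limit of |‖y n‖ - 1| is 0
  have habs : Filter.Tendsto (fun n => |‖y n‖ - 1|) F (nhds 0) := by
    have := ((hy.sub tendsto_const_nhds).abs :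
      Filter.Tendsto (fun n => |‖y n‖ - 1|) F (nhds |1 - 1|))
    simpa using this
  have hg : Filter.Tendsto (fun n => 1 + ε/2 + |‖y n‖ - 1|) F (nhds (1 + ε/2)) := by
    have := (tendsto_const_nhds : Filter.Tendsto (fun _ : ℕ => 1 + ε/2) F _).add habs
    simpa using this
  refine ⟨x, ⟨1, hx1⟩, hx0, ?_, ?_, ?_⟩
  · refine Filter.Tendsto.congr' ?_ (tendsto_const_nhds : Filter.Tendsto (fun _ : ℕ => (1:ℝ)) F _)
    exact hS.mono fun n h => ((hxS n h).1).symm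
  · obtain ⟨L₁, hL₁⟩ := exists_ultrafilter_lim F (fun n => ‖y n + x n‖) (C + 1)
      (fun n => by
        rw [abs_of_nonneg (norm_nonneg _)]
        exact le_trans (norm_add_le _ _) (add_le_add (hC n) (hx1 n)))
    refine ⟨L₁, ?_, hL₁⟩
    have hle : L₁ ≤ 1 + ε/2 :=
      le_of_tendsto_of_tendsto hL₁ hg (hS.mono fun n h => (hxS n h).2.1)
    linarith
  · obtain ⟨L₂, hL₂⟩ := exists_ultrafilter_lim F (fun n => ‖y n - x n‖) (C + 1)
      (fun n => by
        rw [abs_of_nonneg (norm_nonneg _)]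
        exact le_trans (norm_sub_le _ _) (add_le_add (hC n) (hx1 n)))
    refine ⟨L₂, ?_, hL₂⟩
    have hle : L₂ ≤ 1 + ε/2 :=
      le_of_tendsto_of_tendsto hL₂ hg (hS.mono fun n h => (hxS n h).2.2)
    linarith
end
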